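/- Let (R, m_R) be a Noetherian local ring of Krull dimension d and let {I_n} be a graded family of m_R-primary ideals in R. Then the limit lim_{n→∞} e(I_n)/n^d exists (as a real number), where e(I_n) is the Hilbert–Samuel multiplicity of I_n. -/

import Mathlib

open Filter IsLocalRing

/-- The length of an `R`-module `M`, defined as the Krull dimension of its lattice of
submodules; for modules of finite length this agrees with the Jordan–Hölder
composition length. -/
noncomputable def modLength (R M : Type*) [Ring R] [AddCommGroup M] [Module R M] :
    WithBot ℕ∞ :=
  Order.krullDim (Submodule R M)

/-- The length of a module as a real number (with junk value `0` for modules of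
infinite length). -/
noncomputable def lenR (R M : Type*) [Ring R] [AddCommGroup M] [Module R M] : ℝ :=
  (((modLength R M).unbotD 0).toNat : ℝ)

/-- An ideal `I` of a local ring is `m`-primary if it is primary with radical the
maximal ideal. -/
def IsMaxPrimary (R : Type*) [CommRing R] [IsLocalRing R] (I : Ideal R) : Prop :=
  I.IsPrimary ∧ I.radical = maximalIdeal R

set_option linter.unusedSectionVars false
set_option linter.unusedVariables false

section AuxOrder


private lemma aux_height_add_one_le {α : Type*} [Preorder α] {x y : α} (h : x < y) :
    Order.height x + 1 ≤ Order.height y := by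
  rcases eq_or_ne (Order.height x) ⊤ with htop | hfin
  · have hy : Order.height y = ⊤ := top_le_iff.mp (htop ▸ Order.height_mono h.le)
    rw [hy]
    exact le_top
  · exact Order.add_one_le_of_lt (Order.height_strictMono h (lt_top_iff_ne_top.mpr hfin))

private lemma aux_series_le {α β γ : Type*} [Preorder α] [PartialOrder β] [PartialOrder γ]
    (f : α → β × γ) (hf : ∀ x y : α, x < y → f x ≤ f y ∧ f x ≠ f y) (p : LTSeries α) :
    (p.length : ℕ∞) ≤ Order.height (f p.last).1 + Order.height (f p.last).2 := by
  suffices H : ∀ (L : ℕ) (p : LTSeries α), p.length = L →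
      (p.length : ℕ∞) ≤ Order.height (f p.last).1 + Order.height (f p.last).2 by
    exact H p.length p rfl
  intro L
  induction L with
  | zero => intro p hlen; rw [hlen]; simp
  | succ L ih =>
    intro p hlen
    rw [hlen]
    have hq : p.eraseLast.length = L := by simp [hlen]
    have hlt : p.eraseLast.last < p.last := p.eraseLast_last_rel_last (by omega)
    obtain ⟨hle, hne⟩ := hf _ _ hlt
    have IH := hq ▸ ih p.eraseLast hq
    have h1 : (f p.eraseLast.last).1 ≤ (f p.last).1 := hle.1
    have h2 : (f p.eraseLast.last).2 ≤ (f p.last).2 := hle.2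
    rcases eq_or_ne (f p.eraseLast.last).1 (f p.last).1 with heq | hne1
    · have hlt2 : (f p.eraseLast.last).2 < (f p.last).2 :=
        lt_of_le_of_ne h2 (fun h2eq => hne (Prod.ext heq h2eq))
      calc ((L + 1 : ℕ) : ℕ∞) = (L : ℕ∞) + 1 := by push_cast; ring
        _ ≤ (Order.height (f p.eraseLast.last).1 + Order.height (f p.eraseLast.last).2) + 1 :=
            add_le_add_left IH 1
        _ = Order.height (f p.eraseLast.last).1 + (Order.height (f p.eraseLast.last).2 + 1) := by
            rw [add_assoc]
        _ ≤ Order.height (f p.last).1 + Order.height (f p.last).2 :=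
            add_le_add (heq ▸ le_refl _) (aux_height_add_one_le hlt2)
    · have hlt1 : (f p.eraseLast.last).1 < (f p.last).1 := lt_of_le_of_ne h1 hne1
      calc ((L + 1 : ℕ) : ℕ∞) = (L : ℕ∞) + 1 := by push_cast; ring
        _ ≤ (Order.height (f p.eraseLast.last).1 + Order.height (f p.eraseLast.last).2) + 1 :=
            add_le_add_left IH 1
        _ = (Order.height (f p.eraseLast.last).1 + 1) + Order.height (f p.eraseLast.last).2 := by
            rw [add_assoc, add_comm (Order.height (f p.eraseLast.last).2) 1, ← add_assoc]
        _ ≤ Order.height (f p.last).1 + Order.height (f p.last).2 :=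
            add_le_add (aux_height_add_one_le hlt1) (Order.height_mono h2)

private lemma aux_krullDim_le_add {α β γ : Type*} [Preorder α] [PartialOrder β] [PartialOrder γ]
    (f : α → β × γ) (hf : ∀ x y : α, x < y → f x ≤ f y ∧ f x ≠ f y) :
    Order.krullDim α ≤ Order.krullDim β + Order.krullDim γ := by
  rcases isEmpty_or_nonempty α with h | h
  · rw [Order.krullDim_eq_bot]
    exact bot_le
  · rw [Order.krullDim_eq_iSup_length]
    rw [WithBot.coe_iSup (OrderTop.bddAbove _)]
    apply iSup_le
    intro p
    calc ((p.length : ℕ∞) : WithBot ℕ∞)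
        ≤ ((Order.height (f p.last).1 + Order.height (f p.last).2 : ℕ∞) : WithBot ℕ∞) := by
          exact_mod_cast aux_series_le f hf p
      _ = (Order.height (f p.last).1 : WithBot ℕ∞) + (Order.height (f p.last).2 : WithBot ℕ∞) := by
          push_cast; rfl
      _ ≤ _ := add_le_add (Order.height_le_krullDim _) (Order.height_le_krullDim _)

private lemma aux_krullDim_le_inf_sup {α : Type*} [Lattice α] [IsModularLattice α] (N : α) :
    Order.krullDim α ≤
      Order.krullDim {x : α // x ≤ N} + Order.krullDim {x : α // N ≤ x} := by
  apply aux_krullDim_le_add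
    (fun x => (⟨x ⊓ N, inf_le_right⟩, ⟨x ⊔ N, le_sup_right⟩))
  intro x y hxy
  refine ⟨⟨Subtype.mk_le_mk.mpr (inf_le_inf_right _ hxy.le),
      Subtype.mk_le_mk.mpr (sup_le_sup_right hxy.le _)⟩, fun hEq => ?_⟩
  have h1 : x ⊓ N = y ⊓ N := congrArg (fun z => (z.1 : α)) hEq
  have h2 : x ⊔ N = y ⊔ N := congrArg (fun z => (z.2 : α)) hEq
  have hy : y = (x ⊔ N) ⊓ y := by
    rw [h2]
    exact (inf_eq_right.mpr le_sup_left).symm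
  have hx : y = x := by
    calc y = (x ⊔ N) ⊓ y := by rw [h2]; exact (inf_eq_right.mpr le_sup_left).symm
      _ = x ⊔ (N ⊓ y) := sup_inf_assoc_of_le _ hxy.le
      _ = x ⊔ (x ⊓ N) := by rw [inf_comm N y, ← h1]
      _ = x := by rw [sup_inf_self]
  exact hxy.ne hx.symm

private lemma aux_krullDim_le_one {β : Type*} [PartialOrder β] [BoundedOrder β]
    [IsSimpleOrder β] : Order.krullDim β ≤ 1 := by
  have : Nonempty β := ⟨⊥⟩
  rw [Order.krullDim_eq_iSup_length]
  have h1 : ((1 : ℕ∞) : WithBot ℕ∞) = 1 := rfl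
  rw [← h1, WithBot.coe_le_coe]
  apply iSup_le
  intro p
  suffices h : p.length ≤ 1 by exact_mod_cast h
  by_contra hc
  push_neg at hc
  have h01 : p.toFun ⟨0, by omega⟩ < p.toFun ⟨1, by omega⟩ :=
    p.strictMono (Fin.mk_lt_mk.mpr (by omega))
  have h12 : p.toFun ⟨1, by omega⟩ < p.toFun ⟨2, by omega⟩ :=
    p.strictMono (Fin.mk_lt_mk.mpr (by omega))
  rcases IsSimpleOrder.eq_bot_or_eq_top (p.toFun ⟨1, by omega⟩) with h | h <;> rw [h] at h01 h12
  · exact not_lt_bot h01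
  · exact not_top_lt h12

private lemma aux_ne_top_step {a b : WithBot ℕ∞} (hab : a ≤ b + 1) (hb : b ≠ ⊤) : a ≠ ⊤ := by
  intro ha
  rw [ha] at hab
  induction b using WithBot.recBotCoe with
  | bot => rw [WithBot.bot_add] at hab; exact absurd (top_le_iff.mp hab) (by simp)
  | coe b =>
    have hb' : b ≠ ⊤ := by
      intro h
      exact hb (by rw [h]; rfl)
    have : ((b : WithBot ℕ∞)) + 1 = ((b + 1 : ℕ∞) : WithBot ℕ∞) := by push_cast; rfl
    rw [this] at hab
    have : (b + 1 : ℕ∞) = ⊤ := by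
      have := top_le_iff.mp hab
      exact_mod_cast this
    have hbt : b = ⊤ := by
      rcases eq_or_ne b ⊤ with h | h
      · exact h
      · exfalso
        lift b to ℕ using h
        exact absurd this (by exact_mod_cast ENat.coe_ne_top (b + 1))
    exact hb' hbt

private lemma aux_fin_krullDim_ne_top {R M : Type*} [Ring R] [AddCommGroup M]
    [Module R M] (h : IsFiniteLength R M) : Order.krullDim (Submodule R M) ≠ ⊤ := by
  induction' h with M _ _ _ M _ _ N _ hN ih
  · have hsub : Subsingleton (Submodule R M) :=
      ⟨fun a b => by ext x; rw [Subsingleton.elim x 0]; simp⟩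
    intro hc
    have := Order.krullDim_nonpos_of_subsingleton (α := Submodule R M)
    rw [hc] at this
    have h0 : ((0 : ℕ∞) : WithBot ℕ∞) = (0 : WithBot ℕ∞) := rfl
    rw [top_le_iff, ← h0] at this
    have : (⊤ : ℕ∞) = (0 : ℕ∞) := by exact_mod_cast this.symm
    simp at this
  · have h1 := aux_krullDim_le_inf_sup (α := Submodule R M) N
    have e1 : Order.krullDim {x : Submodule R M // x ≤ N} = Order.krullDim (Submodule R N) :=
      (Order.krullDim_eq_of_orderIso (Submodule.MapSubtype.orderIso N)).symm
    have e2 : Order.krullDim {x : Submodule R M // N ≤ x} =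
        Order.krullDim (Submodule R (M ⧸ N)) :=
      (Order.krullDim_eq_of_orderIso (Submodule.comapMkQRelIso N)).symm
    have h2 : Order.krullDim (Submodule R (M ⧸ N)) ≤ 1 := aux_krullDim_le_one
    have hle : Order.krullDim (Submodule R M) ≤ Order.krullDim (Submodule R N) + 1 := by
      refine le_trans h1 ?_
      rw [e1, e2]
      exact add_le_add (le_refl _) h2
    exact aux_ne_top_step hle ih

end AuxOrder

section AuxAlgebra

variable {R : Type*} [CommRing R] [IsLocalRing R] [IsNoetherianRing R]

private lemma aux_lenR_nonneg (M : Type*) [AddCommGroup M] [Module R M] : 0 ≤ lenR R M :=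
  Nat.cast_nonneg _



private lemma aux_kill {P : Type*} [AddCommGroup P] [Module R P] [Module.Finite R P]
    (htor : Module.IsTorsionBySet R P ((maximalIdeal R : Ideal R) : Set R)) :
    IsArtinian R P := by
  letI : Module (R ⧸ maximalIdeal R) P := htor.module
  letI : Field (R ⧸ maximalIdeal R) := Ideal.Quotient.field (maximalIdeal R)
  let σ : R →+* R ⧸ maximalIdeal R := Ideal.Quotient.mk (maximalIdeal R)
  letI : RingHomSurjective σ := ⟨Ideal.Quotient.mk_surjective⟩
  let l : P →ₛₗ[σ] P :=
    { toFun := id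
      map_add' := fun _ _ => rfl
      map_smul' := fun r x => (htor.mk_smul r x).symm }
  have hss : IsSemisimpleModule R P :=
    (l.isSemisimpleModule_iff_of_bijective Function.bijective_id).mpr inferInstance
  infer_instance

private lemma aux_art (c : ℕ) :
    IsArtinian R (R ⧸ (maximalIdeal R ^ c : Ideal R)) := by
  induction c with
  | zero =>
    rw [pow_zero, Ideal.one_eq_top]
    have : Subsingleton (R ⧸ (⊤ : Ideal R)) :=
      Submodule.Quotient.subsingleton_iff.mpr rfl
    infer_instance
  | succ c ih =>
    set p : Ideal R := maximalIdeal R ^ (c + 1) with hp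
    set N : Submodule R (R ⧸ p) := Submodule.map p.mkQ (maximalIdeal R ^ c : Ideal R) with hN
    have hle : p ≤ (maximalIdeal R ^ c : Ideal R) := Ideal.pow_le_pow_right (by omega)
    refine (isArtinian_iff_submodule_quotient N).mpr ⟨?_, ?_⟩
    · -- N is finitely generated and killed by the maximal ideal
      haveI : Module.Finite R N := Module.Finite.iff_fg.mpr (IsNoetherian.noetherian N)
      apply aux_kill
      intro x r
      obtain ⟨y, hy, hxy⟩ := x.2
      apply Subtype.ext
      show (r : R) • (x : R ⧸ p) = 0
      rw [← hxy, ← map_smul, smul_eq_mul]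
      have hmem : (r : R) * y ∈ p := by
        rw [hp, pow_succ]
        exact mul_comm y (r : R) ▸ Ideal.mul_mem_mul hy r.2
      exact (Submodule.Quotient.mk_eq_zero p).mpr hmem
    · -- the quotient is R / m^c
      have equiv := Submodule.quotientQuotientEquivQuotient p (maximalIdeal R ^ c) hle
      exact isArtinian_of_linearEquiv equiv.symm

private lemma aux_art' {J : Ideal R} (c : ℕ) (hc : (maximalIdeal R ^ c : Ideal R) ≤ J) :
    IsArtinian R (R ⧸ J) := by
  haveI := aux_art (R := R) c
  exact isArtinian_of_surjective _
    (Submodule.mapQ _ _ LinearMap.id (by simpa using hc))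
    (fun z => by
      obtain ⟨r, rfl⟩ := Submodule.Quotient.mk_surjective J z
      exact ⟨Submodule.Quotient.mk r, Submodule.mapQ_apply _ _ _ r⟩)

private lemma aux_len_mono {J K : Ideal R} (h : J ≤ K) :
    modLength R (R ⧸ K) ≤ modLength R (R ⧸ J) := by
  apply Order.krullDim_le_of_strictMono
    (Submodule.comap (Submodule.mapQ J K LinearMap.id (by simpa using h)))
  have hsurj : Function.Surjective (Submodule.mapQ J K LinearMap.id (by simpa using h)) := by
    intro z
    obtain ⟨r, rfl⟩ := Submodule.Quotient.mk_surjective K z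
    exact ⟨Submodule.Quotient.mk r, Submodule.mapQ_apply _ _ _ r⟩
  exact Monotone.strictMono_of_injective (fun _ _ hab => Submodule.comap_mono hab)
    (Submodule.comap_injective_of_surjective hsurj)

private lemma aux_toNat_mono {x y : WithBot ℕ∞} (hle : x ≤ y) (hy : y ≠ ⊤) :
    (x.unbotD 0).toNat ≤ (y.unbotD 0).toNat := by
  induction x using WithBot.recBotCoe with
  | bot => simp
  | coe a =>
    induction y using WithBot.recBotCoe with
    | bot => exact absurd hle (WithBot.not_coe_le_bot a)
    | coe b =>
      have hab : a ≤ b := WithBot.coe_le_coe.mp hle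
      have hbt : b ≠ ⊤ := fun hb => hy (by rw [hb]; rfl)
      simpa using ENat.toNat_le_toNat hab hbt

private lemma aux_lenR_mono {J K : Ideal R} (h : J ≤ K)
    (hfin : modLength R (R ⧸ J) ≠ ⊤) : lenR R (R ⧸ K) ≤ lenR R (R ⧸ J) := by
  rw [lenR, lenR, Nat.cast_le]
  exact aux_toNat_mono (aux_len_mono h) hfin

private lemma aux_modLength_ne_top {J : Ideal R} (c : ℕ)
    (hc : (maximalIdeal R ^ c : Ideal R) ≤ J) : modLength R (R ⧸ J) ≠ ⊤ := by
  haveI := aux_art' c hc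
  haveI : IsNoetherian R (R ⧸ J) := inferInstance
  exact aux_fin_krullDim_ne_top
    (isFiniteLength_iff_isNoetherian_isArtinian.mpr ⟨inferInstance, inferInstance⟩)


end AuxAlgebra

/-- **Theorem (Cutkosky, limits of multiplicities of graded families).**
If `(R, m_R)` is a Noetherian local ring of Krull dimension `d` and `{I_n}` is a graded
family of `m_R`-primary ideals, then `lim_{n→∞} e(I_n)/n^d` exists, where the
Hilbert–Samuel multiplicity `e(I_n)` is characterized by
`e(I_n) = lim_{k→∞} d! · ℓ_R(R/I_n^k)/k^d`. -/
theorem stmt0 (R : Type*) [CommRing R] [IsLocalRing R] [IsNoetherianRing R]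
    (d : ℕ) (hd : ringKrullDim R = d)
    (I : ℕ → Ideal R) (hI0 : I 0 = ⊤)
    (hImul : ∀ m n : ℕ, I m * I n ≤ I (m + n))
    (hIprim : ∀ n : ℕ, 1 ≤ n → IsMaxPrimary R (I n))
    (e : ℕ → ℝ)
    (he : ∀ n : ℕ, 1 ≤ n → Tendsto
      (fun k : ℕ => (Nat.factorial d : ℝ) * lenR R (R ⧸ (I n) ^ k) / (k : ℝ) ^ d)
      atTop (nhds (e n))) :
    ∃ L : ℝ, Tendsto (fun n : ℕ => e n / (n : ℝ) ^ d) atTop (nhds L) := by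
  classical
  have he_nonneg : ∀ n : ℕ, 1 ≤ n → 0 ≤ e n := by
    intro n hn
    refine ge_of_tendsto (he n hn) (Eventually.of_forall fun k => ?_)
    exact div_nonneg (mul_nonneg (by positivity) (aux_lenR_nonneg _)) (by positivity)
  have hpow : ∀ a j : ℕ, (I a) ^ j ≤ I (a * j) := by
    intro a j
    induction j with
    | zero => rw [pow_zero, Ideal.one_eq_top, Nat.mul_zero, hI0]
    | succ j ih =>
      calc (I a) ^ (j + 1) = (I a) ^ j * I a := pow_succ _ _
        _ ≤ I (a * j) * I a := Ideal.mul_mono ih (le_refl _)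
        _ ≤ I (a * j + a) := hImul _ _
        _ = I (a * (j + 1)) := by ring_nf
  have hsubm : ∀ r : ℕ, 1 ≤ r → I r ≤ maximalIdeal R := fun r hr =>
    le_trans Ideal.le_radical (le_of_eq (hIprim r hr).2)
  have hrad : ∀ r : ℕ, 1 ≤ r → ∃ c : ℕ, (maximalIdeal R) ^ c ≤ I r := by
    intro r hr
    obtain ⟨c, hc⟩ := Ideal.exists_radical_pow_le_of_fg (I r) (IsNoetherian.noetherian _)
    exact ⟨c, by rwa [(hIprim r hr).2] at hc⟩
  -- KEY inequality : if (I m0)^j ⊆ I n then e n ≤ j^d e m0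
  have hkey : ∀ m0 n j : ℕ, 1 ≤ m0 → 1 ≤ n → 1 ≤ j → (I m0) ^ j ≤ I n →
      e n ≤ (j : ℝ) ^ d * e m0 := by
    intro m0 n j hm0 hn hj hideal
    obtain ⟨c, hc⟩ := hrad m0 hm0
    have hmul : Tendsto (fun k : ℕ => j * k) atTop atTop :=
      tendsto_atTop_mono (fun k => Nat.le_mul_of_pos_left k hj) tendsto_id
    have hlim : Tendsto (fun k : ℕ =>
        (j : ℝ) ^ d * ((Nat.factorial d : ℝ) * lenR R (R ⧸ (I m0) ^ (j * k))
          / ((j * k : ℕ) : ℝ) ^ d)) atTop (nhds ((j : ℝ) ^ d * e m0)) :=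
      ((he m0 hm0).comp hmul).const_mul _
    refine le_of_tendsto_of_tendsto (he n hn) hlim ?_
    filter_upwards [eventually_ge_atTop 1] with k hk
    have hj0 : ((j : ℝ)) ≠ 0 := by positivity
    have hk0 : ((k : ℝ)) ≠ 0 := by
      have : (0 : ℝ) < (k : ℝ) := by exact_mod_cast hk
      linarith
    have hfin : modLength R (R ⧸ (I m0) ^ (j * k)) ≠ ⊤ := by
      refine aux_modLength_ne_top (c * (j * k)) ?_
      rw [pow_mul]
      exact Ideal.pow_right_mono hc _
    have hlen : lenR R (R ⧸ (I n) ^ k) ≤ lenR R (R ⧸ (I m0) ^ (j * k)) := by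
      refine aux_lenR_mono ?_ hfin
      rw [pow_mul]
      exact Ideal.pow_right_mono hideal k
    have hre : (j : ℝ) ^ d * ((Nat.factorial d : ℝ) * lenR R (R ⧸ (I m0) ^ (j * k))
        / ((j * k : ℕ) : ℝ) ^ d)
        = (Nat.factorial d : ℝ) * lenR R (R ⧸ (I m0) ^ (j * k)) / (k : ℝ) ^ d := by
      push_cast
      rw [mul_pow]
      field_simp
    rw [hre]
    exact div_le_div_of_nonneg_right
      (mul_le_mul_of_nonneg_left hlen (by positivity)) (by positivity)
  -- find a uniform exponent C for all residues below m0
  have hCex : ∀ m0 : ℕ, ∃ C : ℕ, 1 ≤ C ∧ ∀ r, 1 ≤ r → r < m0 → (maximalIdeal R) ^ C ≤ I r := by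
    intro m0
    induction m0 with
    | zero => exact ⟨1, le_refl 1, fun r h1 h2 => absurd h2 (by omega)⟩
    | succ m0 ih =>
      obtain ⟨C, hC1, hC⟩ := ih
      rcases Nat.eq_zero_or_pos m0 with h0 | hpos
      · exact ⟨1, le_refl 1, fun r h1 h2 => absurd (by omega : r = 0) (by omega)⟩
      · obtain ⟨c, hc⟩ := hrad m0 hpos
        refine ⟨max (max C c) 1, le_max_right _ 1, fun r h1 h2 => ?_⟩
        rcases Nat.lt_or_ge r m0 with hrm | hrm
        · exact le_trans (Ideal.pow_le_pow_right
            (le_trans (le_trans (le_max_left C c) (le_max_left _ 1)) (le_refl _))) (hC r h1 hrm)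
        · have : r = m0 := by omega
          subst this
          exact le_trans (Ideal.pow_le_pow_right
            (le_trans (le_max_right C c) (le_max_left _ 1))) hc
  -- set up the limit
  set f : ℕ → ℝ := fun n => e n / (n : ℝ) ^ d with hf
  set S : Set ℝ := Set.range (fun i : ℕ => f (i + 1)) with hS
  have hSne : S.Nonempty := ⟨f 1, ⟨0, rfl⟩⟩
  have hfnonneg : ∀ n : ℕ, 1 ≤ n → 0 ≤ f n := fun n hn =>
    div_nonneg (he_nonneg n hn) (by positivity)
  have hSbd : BddBelow S := by
    refine ⟨0, fun x hx => ?_⟩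
    obtain ⟨i, rfl⟩ := hx
    exact hfnonneg _ (by omega)
  set L := sInf S with hL
  have hLle : ∀ n : ℕ, 1 ≤ n → L ≤ f n := by
    intro n hn
    refine csInf_le hSbd ⟨n - 1, ?_⟩
    show f (n - 1 + 1) = f n
    have h7 : n - 1 + 1 = n := by omega
    rw [h7]
  refine ⟨L, ?_⟩
  rw [tendsto_order]
  constructor
  · intro a ha
    filter_upwards [eventually_ge_atTop 1] with n hn
    exact lt_of_lt_of_le ha (hLle n hn)
  · intro b hb
    obtain ⟨x, hxS, hxb⟩ := exists_lt_of_csInf_lt hSne (show L < (L + b) / 2 by linarith)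
    obtain ⟨i0, rfl⟩ := hxS
    set m0 := i0 + 1 with hm0def
    have hm0 : 1 ≤ m0 := by omega
    have hm0R : (0 : ℝ) < (m0 : ℝ) := by exact_mod_cast hm0
    have hfm0b : f m0 < b := by
      have : (L + b) / 2 < b := by linarith
      linarith
    obtain ⟨C, hC1, hCprop⟩ := hCex m0
    clear_value m0
    -- the comparison function G
    set G : ℕ → ℝ := fun q => (((q : ℝ) + (C : ℝ)) / (q : ℝ)) ^ d * f m0 with hG
    have hGtend : Tendsto G atTop (nhds (f m0)) := by
      have h1 : Tendsto (fun q : ℕ => (1 + (C : ℝ) / (q : ℝ)) ^ d * f m0) atTop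
          (nhds (f m0)) := by
        have h2 : Tendsto (fun q : ℕ => 1 + (C : ℝ) / (q : ℝ)) atTop (nhds 1) := by
          have := tendsto_const_div_atTop_nhds_zero_nat (C : ℝ)
          have h3 := this.const_add 1
          simpa using h3
        have h4 := (h2.pow d).mul_const (f m0)
        simpa using h4
      refine h1.congr' ?_
      filter_upwards [eventually_ge_atTop 1] with q hq
      have hq0 : ((q : ℝ)) ≠ 0 := by
        have : (0 : ℝ) < (q : ℝ) := by exact_mod_cast hq
        linarith
      rw [hG]
      field_simp
    have hGev : ∀ᶠ q in atTop, G q < b := hGtend.eventually_lt_const hfm0b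
    have hqtend : Tendsto (fun n : ℕ => n / m0) atTop atTop := by
      refine tendsto_atTop.2 fun bb => ?_
      filter_upwards [eventually_ge_atTop (m0 * bb)] with n hn
      refine (Nat.le_div_iff_mul_le (by omega)).mpr ?_
      rw [Nat.mul_comm]
      exact hn
    filter_upwards [hqtend.eventually hGev, eventually_ge_atTop m0] with n hGn hnm0
    have hn1 : 1 ≤ n := le_trans hm0 hnm0
    set q := n / m0 with hq
    set r := n % m0 with hr
    have hq1 : 1 ≤ q := (Nat.one_le_div_iff hm0).mpr hnm0
    have hqr : m0 * q + r = n := Nat.div_add_mod n m0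
    have hIdeal : (I m0) ^ (q + C) ≤ I n := by
      rcases Nat.eq_zero_or_pos r with hr0 | hrpos
      · have h5 : (I m0) ^ (q + C) ≤ (I m0) ^ q := Ideal.pow_le_pow_right (by omega)
        refine le_trans h5 ?_
        have h6 := hpow m0 q
        rwa [show m0 * q = n by omega] at h6
      · calc (I m0) ^ (q + C) = (I m0) ^ q * (I m0) ^ C := pow_add _ _ _
          _ ≤ I (m0 * q) * I r := by
              refine Ideal.mul_mono (hpow m0 q) ?_
              refine le_trans (Ideal.pow_right_mono (hsubm m0 hm0) C) ?_
              exact hCprop r hrpos (Nat.mod_lt n (by omega))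
          _ ≤ I (m0 * q + r) := hImul _ _
          _ = I n := by rw [hqr]
    have hen : e n ≤ ((q + C : ℕ) : ℝ) ^ d * e m0 :=
      hkey m0 n (q + C) hm0 hn1 (by omega) hIdeal
    have hnR : (0 : ℝ) < (n : ℝ) := by exact_mod_cast hn1
    have hqR : (0 : ℝ) < (q : ℝ) := by exact_mod_cast hq1
    have hchain : f n ≤ G q := by
      have step1 : f n ≤ ((q + C : ℕ) : ℝ) ^ d * e m0 / (n : ℝ) ^ d := by
        rw [hf]
        exact div_le_div_of_nonneg_right hen (by positivity)
      have step2 : ((q + C : ℕ) : ℝ) ^ d * e m0 / (n : ℝ) ^ d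
          ≤ ((q + C : ℕ) : ℝ) ^ d * e m0 / ((m0 : ℝ) * (q : ℝ)) ^ d := by
        apply div_le_div_of_nonneg_left
        · exact mul_nonneg (by positivity) (he_nonneg m0 hm0)
        · positivity
        · apply pow_le_pow_left₀ (by positivity)
          have h9 : (m0 * q : ℕ) ≤ n := by omega
          calc ((m0 : ℝ)) * (q : ℝ) = ((m0 * q : ℕ) : ℝ) := by push_cast; ring
            _ ≤ (n : ℝ) := by exact_mod_cast h9
      have step3 : ((q + C : ℕ) : ℝ) ^ d * e m0 / ((m0 : ℝ) * (q : ℝ)) ^ d = G q := by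
        show _ = (((q : ℝ) + (C : ℝ)) / (q : ℝ)) ^ d * (e m0 / (m0 : ℝ) ^ d)
        rw [div_pow, div_mul_div_comm]
        push_cast
        ring
      calc f n ≤ _ := step1
        _ ≤ _ := step2
        _ = G q := step3
    exact lt_of_le_of_lt hchain hGn
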